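/- Let (X, μ) be a probability space and f, g ∈ L∞(X,μ)⁺ with g ≺_w f. If there exists a non-decreasing strictly convex function φ : ℝ⁺ → ℝ⁺ such that ∫_X φ(f) dμ = ∫_X φ(g) dμ, then g* = f* on [0,1). -/

import Mathlib

open MeasureTheory Set

/-- The decreasing rearrangement `f*(s) = sup { t ≥ 0 : μ{x : f x > t} > s }`. -/
noncomputable def decRearr {X : Type*} [MeasurableSpace X] (μ : Measure X)
    (f : X → ℝ) (s : ℝ) : ℝ :=
  sSup {t : ℝ | 0 ≤ t ∧ ENNReal.ofReal s < μ {x | t < f x}}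

/-- `g ≺_w f` : `f` submajorizes `g`. -/
def Submajorizes {X : Type*} [MeasurableSpace X] (μ : Measure X)
    (f g : X → ℝ) : Prop :=
  ∀ s ∈ Icc (0:ℝ) 1, ∫ t in (0:ℝ)..s, decRearr μ g t ≤ ∫ t in (0:ℝ)..s, decRearr μ f t

namespace DecAux

variable {X : Type*} [MeasurableSpace X] {μ : Measure X} {f : X → ℝ} {C : ℝ}

lemma decRearr_nonneg (μ : Measure X) (f : X → ℝ) (s : ℝ) : 0 ≤ decRearr μ f s :=
  Real.sSup_nonneg (fun _ hx => hx.1)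

lemma notmem_of_gt (hμC : μ {x | C < f x} = 0) {s t : ℝ} (h : C < t) :
    t ∉ {t : ℝ | 0 ≤ t ∧ ENNReal.ofReal s < μ {x | t < f x}} := by
  intro ht
  have : μ {x | t < f x} ≤ μ {x | C < f x} :=
    measure_mono (fun x hx => lt_trans h hx)
  rw [hμC] at this
  exact absurd (lt_of_lt_of_le ht.2 this) (by simp)

lemma bddAbove_set (hμC : μ {x | C < f x} = 0) (s : ℝ) :
    BddAbove {t : ℝ | 0 ≤ t ∧ ENNReal.ofReal s < μ {x | t < f x}} :=
  ⟨C, fun t ht => not_lt.mp (fun h => notmem_of_gt hμC h ht)⟩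

lemma decRearr_le (hC : 0 ≤ C) (hμC : μ {x | C < f x} = 0) (s : ℝ) :
    decRearr μ f s ≤ C :=
  Real.sSup_le (fun t ht => not_lt.mp (fun h => notmem_of_gt hμC h ht)) hC

lemma decRearr_anti (hμC : μ {x | C < f x} = 0) : Antitone (decRearr μ f) := by
  intro s s' hss'
  rcases Set.eq_empty_or_nonempty
      {t : ℝ | 0 ≤ t ∧ ENNReal.ofReal s' < μ {x | t < f x}} with he | hne
  · rw [decRearr, he, Real.sSup_empty]; exact decRearr_nonneg μ f s
  · exact csSup_le_csSup (bddAbove_set hμC s) hne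
      (fun t ht => ⟨ht.1, lt_of_le_of_lt (by gcongr) ht.2⟩)

lemma lt_decRearr_iff (hμC : μ {x | C < f x} = 0) {s t : ℝ} (ht : 0 ≤ t) :
    t < decRearr μ f s ↔ ENNReal.ofReal s < μ {x | t < f x} := by
  constructor
  · intro h
    rcases Set.eq_empty_or_nonempty
        {t' : ℝ | 0 ≤ t' ∧ ENNReal.ofReal s < μ {x | t' < f x}} with he | hne
    · rw [decRearr, he, Real.sSup_empty] at h
      exact absurd (lt_of_le_of_lt ht h) (lt_irrefl 0)
    · obtain ⟨t', ht', htt'⟩ := exists_lt_of_lt_csSup hne h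
      exact lt_of_lt_of_le ht'.2 (measure_mono (fun x hx => lt_trans htt' hx))
  · intro h
    have hmono : ∀ m n : ℕ, m ≤ n →
        {x | t + 1/(m+1) < f x} ⊆ {x | t + 1/(n+1) < f x} := by
      intro m n hmn x hx
      simp only [mem_setOf_eq] at hx ⊢
      have h1 : (1:ℝ)/(n+1) ≤ 1/(m+1) := by
        gcongr
      linarith
    have hU : {x | t < f x} = ⋃ n : ℕ, {x | t + 1/(n+1) < f x} := by
      ext x
      simp only [mem_setOf_eq, mem_iUnion]
      constructor
      · intro hx
        obtain ⟨n, hn⟩ := exists_nat_one_div_lt (sub_pos.mpr hx)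
        exact ⟨n, by linarith⟩
      · rintro ⟨n, hn⟩
        have : (0:ℝ) < 1/(n+1) := by positivity
        linarith
    have hdir : Directed (· ⊆ ·) (fun n : ℕ => {x | t + 1/(n+1) < f x}) :=
      fun m n => ⟨max m n, hmono m _ (le_max_left m n), hmono n _ (le_max_right m n)⟩
    rw [hU, hdir.measure_iUnion, lt_iSup_iff] at h
    obtain ⟨n, hn⟩ := h
    have hmem : t + 1/(n+1) ∈ {t' : ℝ | 0 ≤ t' ∧ ENNReal.ofReal s < μ {x | t' < f x}} :=
      ⟨by positivity, hn⟩
    have : (0:ℝ) < 1/(n+1) := by positivity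
    calc t < t + 1/(n+1) := by linarith
    _ ≤ decRearr μ f s := le_csSup (bddAbove_set hμC s) hmem

lemma meas_decRearr_gt [IsProbabilityMeasure μ] (hfm : Measurable f)
    (hμC : μ {x | C < f x} = 0) {t : ℝ} (ht : 0 ≤ t) :
    volume.restrict (Ioc (0:ℝ) 1) {s | t < decRearr μ f s} = μ {x | t < f x} := by
  have hFm : Measurable (decRearr μ f) := (decRearr_anti hμC).measurable
  have hmeas : MeasurableSet {s : ℝ | t < decRearr μ f s} :=
    measurableSet_lt measurable_const hFm
  rw [Measure.restrict_apply hmeas]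
  have hd1 : μ {x | t < f x} ≤ 1 := prob_le_one
  have hdne : μ {x | t < f x} ≠ ⊤ := (lt_of_le_of_lt hd1 (by simp)).ne
  have hset : {s : ℝ | t < decRearr μ f s} ∩ Ioc 0 1
      = Ioo (0:ℝ) (μ {x | t < f x}).toReal := by
    ext s
    simp only [mem_inter_iff, mem_setOf_eq, mem_Ioc, mem_Ioo]
    constructor
    · rintro ⟨hlt, hs0, hs1⟩
      rw [lt_decRearr_iff hμC ht] at hlt
      exact ⟨hs0, (ENNReal.ofReal_lt_iff_lt_toReal hs0.le hdne).mp hlt⟩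
    · rintro ⟨hs0, hsr⟩
      have hs1 : s ≤ 1 := by
        have : (μ {x | t < f x}).toReal ≤ 1 := by
          rw [← ENNReal.toReal_one]
          exact ENNReal.toReal_mono (by simp) hd1
        linarith
      exact ⟨(lt_decRearr_iff hμC ht).mpr
        ((ENNReal.ofReal_lt_iff_lt_toReal hs0.le hdne).mpr hsr), hs0, hs1⟩
  rw [hset, Real.volume_Ioo, sub_zero, ENNReal.ofReal_toReal hdne]

lemma meas_decRearr_ge [IsProbabilityMeasure μ] (hfm : Measurable f)
    (hμC : μ {x | C < f x} = 0) {t : ℝ} (ht : 0 < t) :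
    volume.restrict (Ioc (0:ℝ) 1) {s | t ≤ decRearr μ f s} = μ {x | t ≤ f x} := by
  have hFm : Measurable (decRearr μ f) := (decRearr_anti hμC).measurable
  set τ : ℕ → ℝ := fun n => t - t/(n+1) with hτ
  have hτ0 : ∀ n : ℕ, 0 ≤ τ n := by
    intro n
    have h1 : t/(n+1) ≤ t := div_le_self ht.le (by linarith [Nat.cast_nonneg (α:=ℝ) n])
    simp only [hτ] at h1 ⊢
    linarith
  have hτlt : ∀ n, τ n < t := by
    intro n
    have : 0 < t/(n+1) := by positivity
    simp only [hτ]; linarith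
  have hτmono : Monotone τ := by
    intro m n hmn
    have : t/(n+1) ≤ t/(m+1) := by
      apply div_le_div_of_nonneg_left ht.le (by positivity)
      have := Nat.cast_le (α := ℝ) |>.mpr hmn
      linarith
    simp only [hτ]; linarith
  have hiff : ∀ y : ℝ, t ≤ y ↔ ∀ n : ℕ, τ n < y := by
    intro y
    constructor
    · intro hy n; exact lt_of_lt_of_le (hτlt n) hy
    · intro hy
      by_contra hlt
      push_neg at hlt
      obtain ⟨n, hn⟩ := exists_nat_one_div_lt (div_pos (sub_pos.mpr hlt) ht)
      have h5 := hy n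
      simp only [hτ] at h5
      have h3 := (div_lt_div_iff₀ (by positivity) ht).mp hn
      have h4 : (t - y) * (n+1) < t := by
        have h6 : t - y < t/(n+1) := by linarith
        exact (lt_div_iff₀ (by positivity)).mp h6
      linarith
  have hXeq : {x | t ≤ f x} = ⋂ n : ℕ, {x | τ n < f x} := by
    ext x; simp only [mem_setOf_eq, mem_iInter]; exact hiff (f x)
  have hSeq : {s : ℝ | t ≤ decRearr μ f s} = ⋂ n : ℕ, {s | τ n < decRearr μ f s} := by
    ext s; simp only [mem_setOf_eq, mem_iInter]; exact hiff _
  have hdirX : Directed (· ⊇ ·) (fun n : ℕ => {x | τ n < f x}) := by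
    have key : ∀ m n : ℕ, m ≤ n → {x | τ n < f x} ⊆ {x | τ m < f x} :=
      fun m n hmn x hx => lt_of_le_of_lt (hτmono hmn) hx
    exact fun m n => ⟨max m n, key m _ (le_max_left m n), key n _ (le_max_right m n)⟩
  have hdirS : Directed (· ⊇ ·) (fun n : ℕ => {s : ℝ | τ n < decRearr μ f s}) := by
    have key : ∀ m n : ℕ, m ≤ n →
        {s : ℝ | τ n < decRearr μ f s} ⊆ {s | τ m < decRearr μ f s} :=
      fun m n hmn s hx => lt_of_le_of_lt (hτmono hmn) hx
    exact fun m n => ⟨max m n, key m _ (le_max_left m n), key n _ (le_max_right m n)⟩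
  rw [hXeq, hSeq, Directed.measure_iInter, Directed.measure_iInter]
  · exact iInf_congr (fun n => meas_decRearr_gt hfm hμC (hτ0 n))
  · exact fun n => (measurableSet_lt measurable_const hfm).nullMeasurableSet
  · exact hdirX
  · exact ⟨0, measure_ne_top μ _⟩
  · exact fun n => ((measurableSet_lt measurable_const hFm)).nullMeasurableSet
  · exact hdirS
  · exact ⟨0, measure_ne_top _ _⟩

lemma integral_comp_decRearr [IsProbabilityMeasure μ] (hfm : Measurable f)
    (hf0 : ∀ᵐ x ∂μ, 0 ≤ f x) (hμC : μ {x | C < f x} = 0)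
    (ψ : ℝ → ℝ) (hψ : Monotone ψ) (hψ0 : ∀ t, 0 ≤ ψ t) :
    ∫ x, ψ (f x) ∂μ = ∫ s in Ioc (0:ℝ) 1, ψ (decRearr μ f s) := by
  set ν := volume.restrict (Ioc (0:ℝ) 1) with hν
  set F := decRearr μ f with hF
  have hFanti : Antitone F := decRearr_anti hμC
  have hFm : Measurable F := hFanti.measurable
  have hψm : Measurable ψ := hψ.measurable
  have key : ∀ t : ℝ, 0 < t → μ {x | t < ψ (f x)} = ν {s | t < ψ (F s)} := by
    intro t _
    set U : Set ℝ := {y | 0 ≤ y ∧ t < ψ y} with hU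
    have hUup : ∀ y ∈ U, ∀ y', y ≤ y' → y' ∈ U :=
      fun y hy y' hyy' => ⟨hy.1.trans hyy', lt_of_lt_of_le hy.2 (hψ hyy')⟩
    have hmuside : μ {x | t < ψ (f x)} = μ {x | f x ∈ U} := by
      apply measure_congr
      filter_upwards [hf0] with x hx
      simp only [eq_iff_iff, mem_setOf_eq, hU]
      exact ⟨fun h => ⟨hx, h⟩, fun h => h.2⟩
    have hnuside : {s : ℝ | t < ψ (F s)} = {s | F s ∈ U} := by
      ext s
      simp only [mem_setOf_eq, hU]
      exact ⟨fun h => ⟨decRearr_nonneg μ f s, h⟩, fun h => h.2⟩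
    rw [hmuside, hnuside]
    rcases Set.eq_empty_or_nonempty U with he | hne
    · simp [he]
    have hbdd : BddBelow U := ⟨0, fun y hy => hy.1⟩
    set c := sInf U with hc
    have hc0 : 0 ≤ c := le_csInf hne (fun y hy => hy.1)
    by_cases hcU : c ∈ U
    · have hUeq : U = Ici c := by
        ext y
        constructor
        · intro hy; exact csInf_le hbdd hy
        · intro hy; exact hUup c hcU y hy
      rw [hUeq]
      rcases eq_or_lt_of_le hc0 with hc0' | hcpos
      · have h1 : {x | f x ∈ Ici c} =ᵐ[μ] (univ : Set X) := by
          filter_upwards [hf0] with x hx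
          have : (x ∈ {x | f x ∈ Ici c}) ↔ (x ∈ (univ : Set X)) := by
            simp only [mem_setOf_eq, mem_Ici, mem_univ, iff_true]
            rw [← hc0']; exact hx
          exact eq_iff_iff.mpr this
        have h2 : {s : ℝ | F s ∈ Ici c} = univ := by
          ext s; simp only [mem_setOf_eq, mem_Ici, mem_univ, iff_true]
          rw [← hc0']; exact decRearr_nonneg μ f s
        rw [measure_congr h1, h2, measure_univ]
        simp [hν, Real.volume_Ioc]
      · have := meas_decRearr_ge (μ := μ) hfm hμC hcpos
        simp only [mem_setOf_eq, mem_Ici]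
        rw [← hF] at this
        exact this.symm
    · have hUeq : U = Ioi c := by
        ext y
        constructor
        · intro hy
          rcases lt_or_eq_of_le (csInf_le hbdd hy) with h | h
          · exact h
          · rw [hc, h]; exact absurd (h ▸ hy : sInf U ∈ U) (by rw [← hc]; exact hcU)
        · intro hy
          obtain ⟨u, huU, huy⟩ := exists_lt_of_csInf_lt hne hy
          exact hUup u huU y huy.le
      rw [hUeq]
      have := meas_decRearr_gt (μ := μ) hfm hμC hc0
      simp only [mem_setOf_eq, mem_Ioi]
      rw [← hF] at this
      exact this.symm
  have hl1 : ∫⁻ x, ENNReal.ofReal (ψ (f x)) ∂μ = ∫⁻ t in Ioi (0:ℝ), μ {x | t < ψ (f x)} :=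
    lintegral_eq_lintegral_meas_lt μ (ae_of_all _ (fun x => hψ0 (f x)))
      (hψm.comp hfm).aemeasurable
  have hl2 : ∫⁻ s, ENNReal.ofReal (ψ (F s)) ∂ν = ∫⁻ t in Ioi (0:ℝ), ν {s | t < ψ (F s)} :=
    lintegral_eq_lintegral_meas_lt ν (ae_of_all _ (fun s => hψ0 (F s)))
      (hψm.comp hFm).aemeasurable
  have hmid : ∫⁻ t in Ioi (0:ℝ), μ {x | t < ψ (f x)}
      = ∫⁻ t in Ioi (0:ℝ), ν {s | t < ψ (F s)} := by
    apply setLIntegral_congr_fun measurableSet_Ioi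
    exact (fun t ht => key t ht)
  have hb1 : ∫ x, ψ (f x) ∂μ = (∫⁻ x, ENNReal.ofReal (ψ (f x)) ∂μ).toReal :=
    integral_eq_lintegral_of_nonneg_ae (ae_of_all _ (fun x => hψ0 (f x)))
      (hψm.comp hfm).aestronglyMeasurable
  have hb2 : ∫ s, ψ (F s) ∂ν = (∫⁻ s, ENNReal.ofReal (ψ (F s)) ∂ν).toReal :=
    integral_eq_lintegral_of_nonneg_ae (ae_of_all _ (fun s => hψ0 (F s)))
      (hψm.comp hFm).aestronglyMeasurable
  rw [hb1, hb2, hl1, hl2, hmid]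

lemma integral_mul_nonneg_of_antitone (k h : ℝ → ℝ) (hk : Antitone k)
    (hk0 : ∀ s, 0 ≤ k s) {M : ℝ} (hkM : ∀ s, k s ≤ M)
    (hm : Measurable h) {Ch : ℝ} (hhb : ∀ s, |h s| ≤ Ch)
    (hH : ∀ s ∈ Icc (0:ℝ) 1, 0 ≤ ∫ t in (0:ℝ)..s, h t) :
    0 ≤ ∫ s in Ioc (0:ℝ) 1, k s * h s := by
  have hkm : Measurable k := hk.measurable
  set ν := volume.restrict (Ioc (0:ℝ) 1) with hν
  set ρ := volume.restrict (Ioc (0:ℝ) M) with hρ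
  haveI : IsFiniteMeasure ν := by
    constructor; rw [hν, Measure.restrict_apply_univ, Real.volume_Ioc]
    exact ENNReal.ofReal_lt_top
  haveI : IsFiniteMeasure ρ := by
    constructor; rw [hρ, Measure.restrict_apply_univ, Real.volume_Ioc]
    exact ENNReal.ofReal_lt_top
  set W : ℝ → ℝ → ℝ := fun s u => (Iio (k s)).indicator (fun _ => h s) u with hW
  have hWm : Measurable (Function.uncurry W) := by
    have h1 : Function.uncurry W = fun p : ℝ × ℝ =>
        if p.2 < k p.1 then h p.1 else 0 := by
      ext p
      simp only [Function.uncurry, hW, indicator, mem_Iio]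
    rw [h1]
    exact Measurable.ite (measurableSet_lt measurable_snd (hkm.comp measurable_fst))
      (hm.comp measurable_fst) measurable_const
  have hWint : Integrable (Function.uncurry W) (ν.prod ρ) := by
    refine (integrable_const Ch).mono' hWm.aestronglyMeasurable (ae_of_all _ (fun p => ?_))
    simp only [Function.uncurry, hW, indicator, Real.norm_eq_abs]
    split_ifs
    · exact hhb p.1
    · rw [abs_zero]
      exact (abs_nonneg _).trans (hhb p.1)
  have step1 : ∀ s : ℝ, ∫ u, W s u ∂ρ = k s * h s := by
    intro s
    rw [hW]
    simp only
    rw [integral_indicator measurableSet_Iio]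
    have hset : Iio (k s) ∩ Ioc 0 M = Ioo 0 (k s) := by
      ext u
      simp only [mem_inter_iff, mem_Iio, mem_Ioc, mem_Ioo]
      constructor
      · rintro ⟨h1, h2, _⟩; exact ⟨h2, h1⟩
      · rintro ⟨h1, h2⟩; exact ⟨h2, h1, h2.le.trans (hkM s)⟩
    rw [hρ, Measure.restrict_restrict measurableSet_Iio, hset, setIntegral_const, measureReal_def,
      Real.volume_Ioo, sub_zero, ENNReal.toReal_ofReal (hk0 s), smul_eq_mul, mul_comm]
  have step2 : ∀ u : ℝ, 0 ≤ ∫ s, W s u ∂ν := by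
    intro u
    set A : Set ℝ := {s | u < k s} with hA
    have hAm : MeasurableSet A := measurableSet_lt measurable_const hkm
    have hAlow : ∀ s ∈ A, ∀ s', s' ≤ s → s' ∈ A :=
      fun s hs s' hs' => lt_of_lt_of_le hs (hk hs')
    have hWs : (fun s => W s u) = A.indicator h := by
      ext s
      simp only [hW, indicator, mem_Iio, hA, mem_setOf_eq]
    rw [hWs, integral_indicator hAm]
    set τ := sSup (insert (0:ℝ) (A ∩ Icc 0 1)) with hτ
    have hub : ∀ y ∈ insert (0:ℝ) (A ∩ Icc 0 1), y ≤ 1 := by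
      intro y hy
      rcases hy with rfl | hy
      · exact zero_le_one
      · exact hy.2.2
    have hbdd : BddAbove (insert (0:ℝ) (A ∩ Icc 0 1)) := ⟨1, hub⟩
    have hτ0 : 0 ≤ τ := le_csSup hbdd (mem_insert 0 _)
    have hτ1 : τ ≤ 1 := csSup_le (insert_nonempty _ _) hub
    have hsub1 : A ∩ Ioc 0 1 ⊆ Ioc 0 τ := by
      rintro s ⟨hsA, hs0, hs1⟩
      exact ⟨hs0, le_csSup hbdd (mem_insert_of_mem _ ⟨hsA, hs0.le, hs1⟩)⟩
    have hsub2 : Ioo 0 τ ⊆ A ∩ Ioc 0 1 := by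
      rintro s ⟨hs0, hsτ⟩
      obtain ⟨a, haM, hsa⟩ := exists_lt_of_lt_csSup (insert_nonempty _ _) hsτ
      rcases haM with rfl | haM
      · exact absurd hs0 (not_lt.mpr hsa.le)
      · exact ⟨hAlow a haM.1 s hsa.le, hs0, hsa.le.trans haM.2.2⟩
    have haeeq : (A ∩ Ioc 0 1 : Set ℝ) =ᵐ[volume] Ioc 0 τ := by
      have hsing : ∀ᵐ x : ℝ ∂volume, x ≠ τ := by
        refine measure_eq_zero_iff_ae_notMem.mp ?_
        exact measure_singleton τ
      rw [Filter.eventuallyEq_set]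
      filter_upwards [hsing] with s hsne
      constructor
      · intro hs; exact hsub1 hs
      · rintro ⟨hs0, hsτ⟩
        exact hsub2 ⟨hs0, lt_of_le_of_ne hsτ hsne⟩
    calc (0:ℝ) ≤ ∫ t in (0:ℝ)..τ, h t := hH τ ⟨hτ0, hτ1⟩
    _ = ∫ s in Ioc 0 τ, h s := intervalIntegral.integral_of_le hτ0
    _ = ∫ s in A ∩ Ioc 0 1, h s := (setIntegral_congr_set haeeq).symm
    _ = ∫ s in A, h s ∂ν := by
        rw [hν, Measure.restrict_restrict hAm]
  have hcon : ∫ s in Ioc (0:ℝ) 1, k s * h s = ∫ s, ∫ u, W s u ∂ρ ∂ν := by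
    rw [hν]
    exact (integral_congr_ae (ae_of_all _ (fun s => (step1 s).symm)))
  rw [hcon, integral_integral_swap hWint]
  exact integral_nonneg (fun u => step2 u)

noncomputable def rder (φ : ℝ → ℝ) (b : ℝ) : ℝ :=
  sInf ((fun y => (φ y - φ b) / (y - b)) '' Ioi b)

variable {φ : ℝ → ℝ} {a b y : ℝ}

lemma rder_set_nonempty (b : ℝ) :
    ((fun y => (φ y - φ b) / (y - b)) '' Ioi b).Nonempty :=
  ⟨_, mem_image_of_mem _ (mem_Ioi.mpr (lt_add_one b))⟩

lemma rder_set_bddBelow (hφm : MonotoneOn φ (Ici 0)) (hb : 0 ≤ b) :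
    BddBelow ((fun y => (φ y - φ b) / (y - b)) '' Ioi b) := by
  refine ⟨0, fun v hv => ?_⟩
  obtain ⟨y, hy, rfl⟩ := hv
  have hby : b < y := hy
  have h1 : φ b ≤ φ y := hφm hb (hb.trans hby.le) hby.le
  exact div_nonneg (by linarith) (by linarith)

lemma rder_nonneg (hφm : MonotoneOn φ (Ici 0)) (hb : 0 ≤ b) : 0 ≤ rder φ b :=
  le_csInf (rder_set_nonempty b) (fun v hv => by
    obtain ⟨y, hy, rfl⟩ := hv
    have hby : b < y := hy
    have h1 : φ b ≤ φ y := hφm hb (hb.trans hby.le) hby.le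
    apply div_nonneg (by linarith) (by linarith))

lemma rder_le_slope (hφm : MonotoneOn φ (Ici 0)) (hb : 0 ≤ b) (hy : b < y) :
    rder φ b ≤ (φ y - φ b) / (y - b) :=
  csInf_le (rder_set_bddBelow hφm hb) (mem_image_of_mem _ hy)

lemma slope_le_rder (hφ : StrictConvexOn ℝ (Ici 0) φ) (ha : 0 ≤ a) (hab : a < b) :
    (φ a - φ b) / (a - b) ≤ rder φ b := by
  have hb : 0 ≤ b := ha.trans hab.le
  refine le_csInf (rder_set_nonempty b) (fun v hv => ?_)
  obtain ⟨y, hy, rfl⟩ := hv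
  have hby : b < y := hy
  exact hφ.convexOn.secant_mono (mem_Ici.mpr hb) (mem_Ici.mpr ha)
    (mem_Ici.mpr (hb.trans hby.le)) hab.ne (ne_of_gt hby) (hab.le.trans hby.le)

lemma slope_lt_rder (hφ : StrictConvexOn ℝ (Ici 0) φ) (ha : 0 ≤ a) (hab : a < b) :
    (φ a - φ b) / (a - b) < rder φ b := by
  have hb : 0 ≤ b := ha.trans hab.le
  set m := (a + b) / 2 with hm
  have ham : a < m := by rw [hm]; linarith
  have hmb : m < b := by rw [hm]; linarith
  have h0m : 0 ≤ m := ha.trans ham.le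
  have h1 : (φ a - φ b) / (a - b) < (φ m - φ b) / (m - b) :=
    hφ.secant_strict_mono (mem_Ici.mpr hb) (mem_Ici.mpr ha) (mem_Ici.mpr h0m)
      hab.ne hmb.ne ham
  exact lt_of_lt_of_le h1 (slope_le_rder hφ h0m hmb)

lemma rder_lt_slope (hφ : StrictConvexOn ℝ (Ici 0) φ) (hφm : MonotoneOn φ (Ici 0))
    (hb : 0 ≤ b) (hba : b < a) :
    rder φ b < (φ a - φ b) / (a - b) := by
  set m := (b + a) / 2 with hm
  have hbm : b < m := by rw [hm]; linarith
  have hma : m < a := by rw [hm]; linarith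
  have h0m : 0 ≤ m := hb.trans hbm.le
  have h1 : (φ m - φ b) / (m - b) < (φ a - φ b) / (a - b) :=
    hφ.secant_strict_mono (mem_Ici.mpr hb) (mem_Ici.mpr h0m)
      (mem_Ici.mpr (hb.trans hba.le)) hbm.ne' hba.ne' hma
  exact lt_of_le_of_lt (rder_le_slope hφm hb hbm) h1

lemma rder_mono (hφ : StrictConvexOn ℝ (Ici 0) φ) (hφm : MonotoneOn φ (Ici 0)) :
    MonotoneOn (rder φ) (Ici 0) := by
  intro b₁ hb₁ b₂ hb₂ h
  rcases eq_or_lt_of_le h with rfl | hlt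
  · exact le_rfl
  have h1 : rder φ b₁ ≤ (φ b₂ - φ b₁) / (b₂ - b₁) := rder_le_slope hφm hb₁ hlt
  have h2 : (φ b₁ - φ b₂) / (b₁ - b₂) ≤ rder φ b₂ := slope_le_rder hφ hb₁ hlt
  have h3 : (φ b₂ - φ b₁) / (b₂ - b₁) = (φ b₁ - φ b₂) / (b₁ - b₂) := by
    rw [← neg_div_neg_eq]; ring_nf
  linarith

lemma rder_subgrad_strict (hφ : StrictConvexOn ℝ (Ici 0) φ) (hφm : MonotoneOn φ (Ici 0))
    (ha : 0 ≤ a) (hb : 0 ≤ b) (hne : a ≠ b) :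
    φ b + rder φ b * (a - b) < φ a := by
  rcases lt_or_gt_of_ne hne with hab | hba
  · have h1 := slope_lt_rder hφ ha hab
    rw [div_lt_iff_of_neg (by linarith : a - b < 0)] at h1
    linarith
  · have h1 := rder_lt_slope hφ hφm hb hba
    rw [lt_div_iff₀ (by linarith : (0:ℝ) < a - b)] at h1
    linarith

lemma rder_subgrad (hφ : StrictConvexOn ℝ (Ici 0) φ) (hφm : MonotoneOn φ (Ici 0))
    (ha : 0 ≤ a) (hb : 0 ≤ b) :
    φ b + rder φ b * (a - b) ≤ φ a := by
  rcases eq_or_ne a b with rfl | hne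
  · simp
  · exact (rder_subgrad_strict hφ hφm ha hb hne).le

lemma rder_le_bound (hφm : MonotoneOn φ (Ici 0)) (hb : 0 ≤ b) :
    rder φ b ≤ φ (b + 1) - φ b := by
  have h := rder_le_slope hφm hb (lt_add_one b)
  simpa using h

end DecAux

theorem decRearr_eq_of_integral_strictConvex_eq {X : Type*} [MeasurableSpace X]
    (μ : Measure X) [IsProbabilityMeasure μ] (f g : X → ℝ)
    (hfm : Measurable f) (hgm : Measurable g)
    (hf0 : ∀ᵐ x ∂μ, 0 ≤ f x) (hg0 : ∀ᵐ x ∂μ, 0 ≤ g x)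
    (hfb : ∃ C, ∀ᵐ x ∂μ, f x ≤ C) (hgb : ∃ C, ∀ᵐ x ∂μ, g x ≤ C)
    (hsub : Submajorizes μ f g)
    (φ : ℝ → ℝ) (hφ : StrictConvexOn ℝ (Ici 0) φ) (hφm : MonotoneOn φ (Ici 0))
    (hφ0 : ∀ t, 0 ≤ t → 0 ≤ φ t)
    (heq : ∫ x, φ (f x) ∂μ = ∫ x, φ (g x) ∂μ) :
    ∀ s ∈ Ico (0:ℝ) 1, decRearr μ g s = decRearr μ f s := by
  classical
  open DecAux in
  obtain ⟨C₁, hfC₁⟩ := hfb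
  obtain ⟨C₂, hgC₂⟩ := hgb
  set C : ℝ := max C₁ (max C₂ 0) with hCdef
  have hC : 0 ≤ C := le_trans (le_max_right C₂ 0) (le_max_right _ _)
  have hfC : ∀ᵐ x ∂μ, f x ≤ C := by
    filter_upwards [hfC₁] with x hx
    exact hx.trans (le_max_left _ _)
  have hgC : ∀ᵐ x ∂μ, g x ≤ C := by
    filter_upwards [hgC₂] with x hx
    exact hx.trans (le_trans (le_max_left C₂ 0) (le_max_right _ _))
  have hμCf : μ {x | C < f x} = 0 := by
    refine measure_eq_zero_iff_ae_notMem.mpr ?_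
    filter_upwards [hfC] with x hx
    simpa using not_lt.mpr hx
  have hμCg : μ {x | C < g x} = 0 := by
    refine measure_eq_zero_iff_ae_notMem.mpr ?_
    filter_upwards [hgC] with x hx
    simpa using not_lt.mpr hx
  set ν := volume.restrict (Ioc (0:ℝ) 1) with hν
  haveI : IsFiniteMeasure ν := by
    constructor; rw [hν, Measure.restrict_apply_univ, Real.volume_Ioc]
    exact ENNReal.ofReal_lt_top
  set F := decRearr μ f with hF
  set G := decRearr μ g with hG
  have hFanti : Antitone F := decRearr_anti hμCf
  have hGanti : Antitone G := decRearr_anti hμCg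
  have hFm : Measurable F := hFanti.measurable
  have hGm : Measurable G := hGanti.measurable
  have hF0 : ∀ s, 0 ≤ F s := decRearr_nonneg μ f
  have hG0 : ∀ s, 0 ≤ G s := decRearr_nonneg μ g
  have hFC : ∀ s, F s ≤ C := decRearr_le hC hμCf
  have hGC : ∀ s, G s ≤ C := decRearr_le hC hμCg
  -- the monotone extension ψ of φ
  set ψ : ℝ → ℝ := fun t => φ (max t 0) with hψdef
  have hψmono : Monotone ψ := fun x y hxy =>
    hφm (le_max_right x 0) (le_max_right y 0) (max_le_max hxy le_rfl)
  have hψ0 : ∀ t, 0 ≤ ψ t := fun t => hφ0 _ (le_max_right _ _)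
  have hψeq : ∀ t : ℝ, 0 ≤ t → ψ t = φ t := fun t ht => by
    simp only [hψdef, max_eq_left ht]
  -- equality of the ψ-integrals over [0,1]
  have heqψ : ∫ s, ψ (F s) ∂ν = ∫ s, ψ (G s) ∂ν := by
    have e1 : ∫ x, ψ (f x) ∂μ = ∫ x, φ (f x) ∂μ := by
      apply integral_congr_ae
      filter_upwards [hf0] with x hx
      exact hψeq _ hx
    have e2 : ∫ x, ψ (g x) ∂μ = ∫ x, φ (g x) ∂μ := by
      apply integral_congr_ae
      filter_upwards [hg0] with x hx
      exact hψeq _ hx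
    have e3 := integral_comp_decRearr (μ := μ) hfm hf0 hμCf ψ hψmono hψ0
    have e4 := integral_comp_decRearr (μ := μ) hgm hg0 hμCg ψ hψmono hψ0
    rw [← hν, ← hF] at e3
    rw [← hν, ← hG] at e4
    rw [← e3, ← e4, e1, e2, heq]
  -- the slope function
  set k : ℝ → ℝ := fun s => rder φ (G s) with hk
  have hkanti : Antitone k := fun s₁ s₂ h12 =>
    rder_mono hφ hφm (mem_Ici.mpr (hG0 s₂)) (mem_Ici.mpr (hG0 s₁)) (hGanti h12)
  have hk0 : ∀ s, 0 ≤ k s := fun s => rder_nonneg hφm (hG0 s)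
  set M : ℝ := φ (C + 1) with hM
  have hkM : ∀ s, k s ≤ M := by
    intro s
    have h1 := rder_le_bound hφm (hG0 s)
    have h2 : φ (G s + 1) ≤ φ (C + 1) :=
      hφm (mem_Ici.mpr (by linarith [hG0 s])) (mem_Ici.mpr (by linarith))
        (by linarith [hGC s])
    have h3 : 0 ≤ φ (G s) := hφ0 _ (hG0 s)
    rw [hM]; linarith
  have hM0 : 0 ≤ M := hφ0 _ (by linarith)
  -- the difference function
  set h : ℝ → ℝ := fun s => F s - G s with hh
  have hhm : Measurable h := hFm.sub hGm
  have hhb : ∀ s, |h s| ≤ C := by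
    intro s
    rw [abs_le]
    constructor
    · simp only [hh]; linarith [hF0 s, hGC s]
    · simp only [hh]; linarith [hFC s, hG0 s]
  have hFint : ∀ s : ℝ, 0 ≤ s → IntervalIntegrable F volume 0 s := fun s hs =>
    (hFanti.antitoneOn _).intervalIntegrable
  have hGint : ∀ s : ℝ, 0 ≤ s → IntervalIntegrable G volume 0 s := fun s hs =>
    (hGanti.antitoneOn _).intervalIntegrable
  have hH : ∀ s ∈ Icc (0:ℝ) 1, 0 ≤ ∫ t in (0:ℝ)..s, h t := by
    intro s hs
    have := hsub s hs
    have hsplit : ∫ t in (0:ℝ)..s, h t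
        = (∫ t in (0:ℝ)..s, F t) - ∫ t in (0:ℝ)..s, G t :=
      intervalIntegral.integral_sub (hFint s hs.1) (hGint s hs.1)
    rw [hsplit]
    rw [← hF, ← hG] at *
    linarith [hsub s hs]
  -- positivity of ∫ k·h
  have hkh : 0 ≤ ∫ s in Ioc (0:ℝ) 1, k s * h s :=
    integral_mul_nonneg_of_antitone k h hkanti hk0 hkM hhm hhb hH
  -- pointwise convexity inequality
  have hpt : ∀ s, 0 ≤ ψ (F s) - ψ (G s) - k s * h s := by
    intro s
    have := rder_subgrad hφ hφm (hF0 s) (hG0 s)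
    rw [hψeq _ (hF0 s), hψeq _ (hG0 s)]
    simp only [hk, hh]
    linarith
  -- integrabilities over ν
  have hintF : Integrable (fun s => ψ (F s)) ν := by
    refine (integrable_const (ψ C)).mono'
      ((hψmono.comp_antitone hFanti).measurable.aestronglyMeasurable) (ae_of_all _ (fun s => ?_))
    rw [Real.norm_eq_abs, abs_of_nonneg (hψ0 _)]
    exact hψmono (hFC s)
  have hintG : Integrable (fun s => ψ (G s)) ν := by
    refine (integrable_const (ψ C)).mono'
      ((hψmono.comp_antitone hGanti).measurable.aestronglyMeasurable) (ae_of_all _ (fun s => ?_))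
    rw [Real.norm_eq_abs, abs_of_nonneg (hψ0 _)]
    exact hψmono (hGC s)
  have hintkh : Integrable (fun s => k s * h s) ν := by
    refine (integrable_const (M * C)).mono'
      ((hkanti.measurable.mul hhm).aestronglyMeasurable) (ae_of_all _ (fun s => ?_))
    rw [Real.norm_eq_abs, abs_mul, abs_of_nonneg (hk0 s)]
    have h1 : |h s| ≤ C := hhb s
    have h2 : k s ≤ M := hkM s
    have := mul_le_mul h2 h1 (abs_nonneg _) hM0
    exact this
  -- the integral of the nonneg integrand is ≤ 0, hence = 0 a.e.
  have hzero : ∀ᵐ s ∂ν, ψ (F s) - ψ (G s) - k s * h s = 0 := by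
    have hintFG : Integrable (fun s => ψ (F s) - ψ (G s)) ν := hintF.sub hintG
    have hsplit : ∫ s, (ψ (F s) - ψ (G s) - k s * h s) ∂ν
        = (∫ s, ψ (F s) ∂ν) - (∫ s, ψ (G s) ∂ν) - ∫ s, k s * h s ∂ν := by
      rw [integral_sub hintFG hintkh, integral_sub hintF hintG]
    have hle : ∫ s, (ψ (F s) - ψ (G s) - k s * h s) ∂ν ≤ 0 := by
      rw [hsplit, heqψ]
      have : ∫ s, k s * h s ∂ν = ∫ s in Ioc (0:ℝ) 1, k s * h s := by rw [hν]
      rw [this]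
      linarith
    have hge : 0 ≤ ∫ s, (ψ (F s) - ψ (G s) - k s * h s) ∂ν :=
      integral_nonneg (fun s => hpt s)
    have heq0 : ∫ s, (ψ (F s) - ψ (G s) - k s * h s) ∂ν = 0 := le_antisymm hle hge
    have := (integral_eq_zero_iff_of_nonneg_ae (ae_of_all _ (fun s => hpt s))
      (hintFG.sub hintkh)).mp heq0
    filter_upwards [this] with s hs
    exact hs
  -- hence F = G a.e. on (0,1]
  have haeFG : ∀ᵐ s ∂ν, F s = G s := by
    filter_upwards [hzero] with s hs
    by_contra hne
    have := rder_subgrad_strict hφ hφm (hF0 s) (hG0 s) hne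
    rw [hψeq _ (hF0 s), hψeq _ (hG0 s)] at hs
    simp only [hk, hh] at hs
    linarith
  -- upgrade to the full-measure statement on volume
  have hbadm : MeasurableSet {s : ℝ | ¬ F s = G s} :=
    (measurableSet_eq_fun hFm hGm).compl
  have hbad : volume ({s : ℝ | ¬ F s = G s} ∩ Ioc 0 1) = 0 := by
    have := ae_iff.mp haeFG
    rwa [hν, Measure.restrict_apply hbadm] at this
  -- the two-sided final argument
  have main : ∀ u v : X → ℝ, μ {x | C < u x} = 0 → μ {x | C < v x} = 0 →
      ∀ s₀ ∈ Ico (0:ℝ) 1, ∀ hsym : volume ({s : ℝ | ¬ decRearr μ u s = decRearr μ v s}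
        ∩ Ioc 0 1) = 0,
      decRearr μ u s₀ ≤ decRearr μ v s₀ := by
    intro u v hu hv s₀ hs₀ hsym
    by_contra hlt
    push_neg at hlt
    set U := decRearr μ u with hUdef
    set V := decRearr μ v with hVdef
    have hU0 : 0 ≤ U s₀ := decRearr_nonneg μ u s₀
    set t : ℝ := (max (V s₀) 0 + U s₀) / 2 with ht
    have hmaxlt : max (V s₀) 0 < U s₀ := max_lt hlt (lt_of_le_of_lt (decRearr_nonneg μ v s₀) hlt)
    have ht0 : 0 ≤ t := by
      have := le_max_right (V s₀) 0
      rw [ht]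
      have h0U : (0:ℝ) ≤ U s₀ := hU0
      linarith [le_max_right (V s₀) 0]
    have htU : t < U s₀ := by rw [ht]; linarith
    have htV : V s₀ < t := by
      have := le_max_left (V s₀) 0
      rw [ht]; linarith
    have hdlt : ENNReal.ofReal s₀ < μ {x | t < u x} := (lt_decRearr_iff hu ht0).mp htU
    have hdne : μ {x | t < u x} ≠ ⊤ :=
      (lt_of_le_of_lt prob_le_one (by simp)).ne
    set r : ℝ := (μ {x | t < u x}).toReal with hr
    have hs₀r : s₀ < r := (ENNReal.ofReal_lt_iff_lt_toReal hs₀.1 hdne).mp hdlt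
    set b : ℝ := min r 1 with hb
    have hs₀b : s₀ < b := lt_min hs₀r hs₀.2
    have hIoosub : Ioo s₀ b ⊆ Ioc (0:ℝ) 1 := by
      rintro s ⟨h1, h2⟩
      exact ⟨lt_of_le_of_lt hs₀.1 h1, (h2.trans_le (min_le_right r 1)).le⟩
    have hvolpos : (0:ENNReal) < volume (Ioo s₀ b) := by
      rw [Real.volume_Ioo]
      exact ENNReal.ofReal_pos.mpr (by linarith)
    have hnotsub : ¬ (Ioo s₀ b ⊆ {s : ℝ | ¬ U s = V s} ∩ Ioc 0 1) := by
      intro hss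
      have : volume (Ioo s₀ b) ≤ volume ({s : ℝ | ¬ U s = V s} ∩ Ioc 0 1) :=
        measure_mono hss
      rw [hsym] at this
      exact absurd (le_antisymm this zero_le) hvolpos.ne'
    obtain ⟨s, hsIoo, hsnot⟩ := not_subset.mp hnotsub
    have hsIoc : s ∈ Ioc (0:ℝ) 1 := hIoosub hsIoo
    have hsgood : U s = V s := by
      by_contra hbad'
      exact hsnot ⟨hbad', hsIoc⟩
    have hsr : s < r := lt_of_lt_of_le hsIoo.2 (min_le_left r 1)
    have h5 : ENNReal.ofReal s < μ {x | t < u x} := by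
      rw [hr] at hsr
      exact (ENNReal.ofReal_lt_iff_lt_toReal (hs₀.1.trans hsIoo.1.le) hdne).mpr hsr
    have h6 : t < U s := (lt_decRearr_iff hu ht0).mpr h5
    have h7 : V s ≤ V s₀ := decRearr_anti hv hsIoo.1.le
    rw [hsgood] at h6
    linarith
  intro s₀ hs₀
  have hsym1 : volume ({s : ℝ | ¬ F s = G s} ∩ Ioc 0 1) = 0 := hbad
  have hsym2 : volume ({s : ℝ | ¬ G s = F s} ∩ Ioc 0 1) = 0 := by
    have hset : {s : ℝ | ¬ G s = F s} = {s : ℝ | ¬ F s = G s} := by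
      ext s; simp [eq_comm]
    rw [hset]; exact hbad
  have h1 := main f g hμCf hμCg s₀ hs₀ hsym1
  have h2 := main g f hμCg hμCf s₀ hs₀ hsym2
  exact le_antisymm h2 h1
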